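/- arXiv:2007.05164 — 7 statements merged into one kernel-verified Lean document; each statement's English description precedes it below -/
import Mathlib

section
/- Let m = 2n with n ≥ 1, and let S ⊆ Fin m be a set of size exactly n. Define f : Finset (Fin m) → ℕ by f(T) := min(|T|, n) − 1 if T = S, and f(T) := min(|T|, n) otherwise. Then f is a matroid rank function; that is: f(∅) = 0; f is monotone (T ⊆ U implies f(T) ≤ f(U)); f has unit marginals (f(T ∪ {i}) ≤ f(T) + 1 for all T and all i); and f is submodular (f(A ∪ B) + f(A ∩ B) ≤ f(A) + f(B) for all A, B). -/
/-- The perturbed binary-OXS valuation `f(T) = min(|T|, n) − 1` if `T = S`,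
`min(|T|, n)` otherwise (for `|S| = n`, ground set of `2n` items), is a matroid
rank function: normalized, monotone, with unit marginals, and submodular. -/
theorem perturbed_is_matroid_rank (n : ℕ) (hn : 1 ≤ n)
    (S : Finset (Fin (2 * n))) (hS : S.card = n)
    (f : Finset (Fin (2 * n)) → ℕ)
    (hf : ∀ T : Finset (Fin (2 * n)),
      f T = if T = S then min T.card n - 1 else min T.card n) :
    f ∅ = 0 ∧
    (∀ T U : Finset (Fin (2 * n)), T ⊆ U → f T ≤ f U) ∧
    (∀ (T : Finset (Fin (2 * n))) (i : Fin (2 * n)), f (insert i T) ≤ f T + 1) ∧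
    (∀ A B : Finset (Fin (2 * n)), f (A ∪ B) + f (A ∩ B) ≤ f A + f B) := by
  have hSne : (∅ : Finset (Fin (2 * n))) ≠ S := by
    intro h; rw [← h, Finset.card_empty] at hS; omega
  have hcS : ∀ X : Finset (Fin (2 * n)), X = S → X.card = n := by
    intro X hX; rw [hX, hS]
  refine ⟨?_, ?_, ?_, ?_⟩
  · rw [hf, if_neg hSne]; simp
  · intro T U hTU
    have hc : T.card ≤ U.card := Finset.card_le_card hTU
    rw [hf, hf]
    by_cases hT : T = S <;> by_cases hU : U = S
    · rw [if_pos hT, if_pos hU]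
      have := hcS T hT; have := hcS U hU; omega
    · rw [if_pos hT, if_neg hU]
      have := hcS T hT; omega
    · rw [if_neg hT, if_pos hU]
      have hsub : T ⊆ S := hU ▸ hTU
      have : T.card < S.card :=
        Finset.card_lt_card ⟨hsub, fun h => hT (Finset.Subset.antisymm hsub h)⟩
      have := hcS U hU
      omega
    · rw [if_neg hT, if_neg hU]; omega
  · intro T i
    have hc : (insert i T).card ≤ T.card + 1 := Finset.card_insert_le i T
    have hc2 : T.card ≤ (insert i T).card := Finset.card_le_card (Finset.subset_insert i T)
    rw [hf, hf]
    by_cases hT : T = S <;> by_cases hI : insert i T = S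
    · rw [if_pos hT, if_pos hI]; omega
    · rw [if_pos hT, if_neg hI]; have := hcS T hT; omega
    · rw [if_neg hT, if_pos hI]; have := hcS _ hI; omega
    · rw [if_neg hT, if_neg hI]; omega
  · intro A B
    have hcard : (A ∪ B).card + (A ∩ B).card = A.card + B.card :=
      Finset.card_union_add_card_inter A B
    have hIA : (A ∩ B).card ≤ A.card := Finset.card_le_card Finset.inter_subset_left
    have hIB : (A ∩ B).card ≤ B.card := Finset.card_le_card Finset.inter_subset_right
    have hUA : A.card ≤ (A ∪ B).card := Finset.card_le_card Finset.subset_union_left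
    have hUB : B.card ≤ (A ∪ B).card := Finset.card_le_card Finset.subset_union_right
    -- the key strict fact in the critical case
    have key : ∀ Y : Finset (Fin (2 * n)), Y ≠ S → S ∪ Y ≠ S → S ∩ Y ≠ S →
        (S ∩ Y).card + 1 ≤ Y.card ∧ (S ∩ Y).card + 1 ≤ n := by
      intro Y hY hU hI
      have h1 : S ∩ Y ⊆ S := Finset.inter_subset_left
      have h2 : S ∩ Y ⊆ Y := Finset.inter_subset_right
      have hlt1 : (S ∩ Y).card < S.card :=
        Finset.card_lt_card ⟨h1, fun h => hI (Finset.Subset.antisymm h1 h)⟩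
      have hYS : ¬ Y ⊆ S := fun h => hU (by rw [Finset.union_eq_left.mpr h])
      have hlt2 : (S ∩ Y).card < Y.card := by
        refine Finset.card_lt_card ⟨h2, fun h => hYS ?_⟩
        intro y hy
        exact Finset.mem_of_mem_inter_left (h hy)
      omega
    rw [hf, hf, hf, hf]
    by_cases hA : A = S <;> by_cases hB : B = S
    · have h1 : A ∪ B = S := by rw [hA, hB, Finset.union_self]
      have h2 : A ∩ B = S := by rw [hA, hB, Finset.inter_self]
      rw [if_pos hA, if_pos hB, if_pos h1, if_pos h2]
      have := hcS _ hA; have := hcS _ hB; have := hcS _ h1; have := hcS _ h2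
      omega
    · by_cases hU : A ∪ B = S <;> by_cases hI : A ∩ B = S <;>
        rw [if_pos hA, if_neg hB] <;>
        [rw [if_pos hU, if_pos hI]; rw [if_pos hU, if_neg hI];
         rw [if_neg hU, if_pos hI]; rw [if_neg hU, if_neg hI]]
      · have := hcS _ hA; have := hcS _ hU; have := hcS _ hI; omega
      · have := hcS _ hA; have := hcS _ hU; omega
      · have := hcS _ hA; have := hcS _ hI; omega
      · have hk := key B hB (hA ▸ hU) (hA ▸ hI)
        rw [← hA] at hk
        have := hcS _ hA
        omega
    · by_cases hU : A ∪ B = S <;> by_cases hI : A ∩ B = S <;>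
        rw [if_neg hA, if_pos hB] <;>
        [rw [if_pos hU, if_pos hI]; rw [if_pos hU, if_neg hI];
         rw [if_neg hU, if_pos hI]; rw [if_neg hU, if_neg hI]]
      · have := hcS _ hB; have := hcS _ hU; have := hcS _ hI; omega
      · have := hcS _ hB; have := hcS _ hU; omega
      · have := hcS _ hB; have := hcS _ hI; omega
      · have hU' : S ∪ A ≠ S := by
          rw [hB] at hU; rwa [Finset.union_comm] at hU
        have hI' : S ∩ A ≠ S := by
          rw [hB] at hI; rwa [Finset.inter_comm] at hI
        have hk := key A hA hU' hI'
        have heq : S ∩ A = A ∩ B := by rw [Finset.inter_comm, hB]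
        rw [heq] at hk
        have := hcS _ hB
        omega
    · by_cases hU : A ∪ B = S <;> by_cases hI : A ∩ B = S <;>
        rw [if_neg hA, if_neg hB] <;>
        [rw [if_pos hU, if_pos hI]; rw [if_pos hU, if_neg hI];
         rw [if_neg hU, if_pos hI]; rw [if_neg hU, if_neg hI]] <;>
        [(have := hcS _ hU; have := hcS _ hI); have := hcS _ hU;
         have := hcS _ hI; skip] <;> omega
end

section
/- Let M be a matroid on a finite ground set E with independent-set family I, and let y be a natural number. Then: (a) the family I_y := {T ∈ I : |T| ≤ y} is the independent-set family of a matroid on E; and (b) for any nonnegative weight function c : E → ℝ≥0, defining the matroid-based valuation v(S) := max{Σ_{e∈T} c(e) : T ⊆ S, T ∈ I}, the item truncation of v at y satisfies, for every S ⊆ E: max{v(T) : T ⊆ S, |T| ≤ y} = max{Σ_{e∈T} c(e) : T ⊆ S, T ∈ I_y}. In particular, the class of matroid-based valuations is closed under item truncation. -/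
open Finset

/-- The matroid-based valuation associated to an independent-set family `I`
and nonnegative weights `c` : `v(S) = max{Σ_{e∈T} c e : T ⊆ S, I T}`. -/
def matroidBasedVal {E : Type*} (I : Finset E → Prop) [DecidablePred I]
    (c : E → NNReal) (S : Finset E) : NNReal :=
  (S.powerset.filter I).sup (fun T => ∑ e ∈ T, c e)

/-- Truncating a matroid at cardinality `y` yields a matroid, and the item
truncation at `y` of the associated matroid-based valuation is exactly the
matroid-based valuation of the truncated matroid (with the same weights).
Hence matroid-based valuations are closed under item truncation. -/
theorem matroidBased_closed_under_itemTruncation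
    {E : Type*} [Fintype E] [DecidableEq E]
    (I : Finset E → Prop) [DecidablePred I]
    (hempty : I ∅)
    (hdown : ∀ A B : Finset E, A ⊆ B → I B → I A)
    (haug : ∀ A B : Finset E, I A → I B → A.card < B.card →
      ∃ e ∈ B, e ∉ A ∧ I (insert e A))
    (y : ℕ) (c : E → NNReal) :
    -- (a) the truncated family `I_y = {T ∈ I : |T| ≤ y}` is a matroid
    ((I ∅ ∧ (∅ : Finset E).card ≤ y) ∧
     (∀ A B : Finset E, A ⊆ B → (I B ∧ B.card ≤ y) → (I A ∧ A.card ≤ y)) ∧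
     (∀ A B : Finset E, (I A ∧ A.card ≤ y) → (I B ∧ B.card ≤ y) →
        A.card < B.card → ∃ e ∈ B, e ∉ A ∧ (I (insert e A) ∧ (insert e A).card ≤ y))) ∧
    -- (b) item truncation of the valuation = valuation of the truncated matroid
    (∀ S : Finset E,
      (S.powerset.filter (fun T => T.card ≤ y)).sup (matroidBasedVal I c)
        = (S.powerset.filter (fun T => I T ∧ T.card ≤ y)).sup
            (fun T => ∑ e ∈ T, c e)) := by
  refine ⟨⟨⟨hempty, by simp⟩, ?_, ?_⟩, ?_⟩
  · rintro A B hAB ⟨hB, hBy⟩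
    exact ⟨hdown A B hAB hB, le_trans (card_le_card hAB) hBy⟩
  · rintro A B ⟨hA, hAy⟩ ⟨hB, hBy⟩ hcard
    obtain ⟨e, heB, heA, hins⟩ := haug A B hA hB hcard
    refine ⟨e, heB, heA, hins, ?_⟩
    calc (insert e A).card ≤ A.card + 1 := card_insert_le e A
    _ ≤ B.card := hcard
    _ ≤ y := hBy
  · intro S
    apply le_antisymm
    · apply Finset.sup_le
      intro T hT
      simp only [mem_filter, mem_powerset] at hT
      apply Finset.sup_le
      intro U hU
      simp only [mem_filter, mem_powerset] at hU
      apply Finset.le_sup (f := fun T => ∑ e ∈ T, c e)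
      simp only [mem_filter, mem_powerset]
      exact ⟨hU.1.trans hT.1, hU.2, le_trans (card_le_card hU.1) hT.2⟩
    · apply Finset.sup_le
      intro T hT
      simp only [mem_filter, mem_powerset] at hT
      calc ∑ e ∈ T, c e ≤ matroidBasedVal I c T := by
            apply Finset.le_sup (f := fun T => ∑ e ∈ T, c e)
            simp [hT.2.1]
      _ ≤ _ := by
            apply Finset.le_sup
            simp only [mem_filter, mem_powerset]
            exact ⟨hT.1, hT.2.2⟩
end

section
/- Let k ≥ 1 be an integer, C ≥ 1 a real number, and a : {1,…,k} × {1,…,k} → ℝ satisfy: 0 ≤ a(ℓ,i) ≤ C for all ℓ, i; a(ℓ,ℓ) ≥ a(ℓ,ℓ−1) + 1 for all 2 ≤ ℓ ≤ k; and a(ℓ,ℓ−1) ≥ a(ℓ,i) + 1 for all ℓ and all i ≤ ℓ−2. Then for every permutation σ of {1,…,k}: Σ_{ℓ=1}^{k} (C+1)^{ℓ−1} · a(ℓ, σ(ℓ)) ≤ Σ_{ℓ=1}^{k} (C+1)^{ℓ−1} · a(ℓ, ℓ). That is, the identity matching is a maximum-weight matching of rows to columns when row ℓ is scaled by (C+1)^{ℓ−1}.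 -/
open Finset

/-- Cyclic monotonicity half of the Compatibility lemma: with rows and columns
indexed by `{1,…,k}`, if `0 ≤ a(ℓ,i) ≤ C`, `a(ℓ,ℓ) ≥ a(ℓ,ℓ−1) + 1`, and
`a(ℓ,ℓ−1) ≥ a(ℓ,i) + 1` for `i ≤ ℓ−2`, then the identity matching maximizes
`Σ_ℓ (C+1)^{ℓ−1}·a(ℓ,σ(ℓ))` over all permutations `σ` of `{1,…,k}`. -/
theorem identity_matching_is_max_weight
    (k : ℕ) (hk : 1 ≤ k) (C : ℝ) (hC : 1 ≤ C) (a : ℕ → ℕ → ℝ)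
    (hbound : ∀ ℓ ∈ Finset.Icc 1 k, ∀ i ∈ Finset.Icc 1 k,
      0 ≤ a ℓ i ∧ a ℓ i ≤ C)
    (hdiag : ∀ ℓ : ℕ, 2 ≤ ℓ → ℓ ≤ k → a ℓ (ℓ - 1) + 1 ≤ a ℓ ℓ)
    (hlower : ∀ ℓ ∈ Finset.Icc 1 k, ∀ i : ℕ, 1 ≤ i → i ≤ ℓ - 2 →
      a ℓ i + 1 ≤ a ℓ (ℓ - 1))
    (σ : ℕ → ℕ)
    (hσmap : ∀ ℓ ∈ Finset.Icc 1 k, σ ℓ ∈ Finset.Icc 1 k)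
    (hσinj : Set.InjOn σ (Finset.Icc 1 k)) :
    ∑ ℓ ∈ Finset.Icc 1 k, (C + 1) ^ (ℓ - 1) * a ℓ (σ ℓ)
      ≤ ∑ ℓ ∈ Finset.Icc 1 k, (C + 1) ^ (ℓ - 1) * a ℓ ℓ := by
  clear hk
  induction k with
  | zero => simp
  | succ n ih =>
    have hCpos : (0:ℝ) < C + 1 := by linarith
    rcases Nat.eq_zero_or_pos n with hn | hn
    · subst hn
      have h1 : σ 1 ∈ Finset.Icc 1 1 := hσmap 1 (by simp)
      rw [Finset.mem_Icc] at h1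
      have : σ 1 = 1 := by omega
      simp [this]
    · have hsub : Finset.Icc 1 n ⊆ Finset.Icc 1 (n+1) :=
        Finset.Icc_subset_Icc_right (by omega)
      have htopmem : n + 1 ∈ Finset.Icc 1 (n+1) := by
        rw [Finset.mem_Icc]; omega
      have hσtop := hσmap (n+1) htopmem
      rw [Finset.mem_Icc] at hσtop
      rw [Finset.sum_Icc_succ_top (by omega : 1 ≤ n + 1),
          Finset.sum_Icc_succ_top (by omega : 1 ≤ n + 1)]
      by_cases hfix : σ (n+1) = n + 1
      · have hσmap' : ∀ ℓ ∈ Finset.Icc 1 n, σ ℓ ∈ Finset.Icc 1 n := by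
          intro ℓ hℓ
          have hmem := hσmap ℓ (hsub hℓ)
          rw [Finset.mem_Icc] at hℓ hmem ⊢
          constructor
          · exact hmem.1
          · rcases Nat.lt_or_ge (σ ℓ) (n+1) with h | h
            · omega
            · have hEq : σ ℓ = σ (n+1) := by omega
              have := hσinj
                (by simp only [Finset.coe_Icc, Set.mem_Icc]; omega)
                (by simp only [Finset.coe_Icc, Set.mem_Icc]; omega) hEq
              omega
        have hσinj' : Set.InjOn σ (Finset.Icc 1 n) :=
          hσinj.mono (Finset.coe_subset.mpr hsub)
        have hbound' : ∀ ℓ ∈ Finset.Icc 1 n, ∀ i ∈ Finset.Icc 1 n,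
            0 ≤ a ℓ i ∧ a ℓ i ≤ C :=
          fun ℓ hℓ i hi => hbound ℓ (hsub hℓ) i (hsub hi)
        have hdiag' : ∀ ℓ : ℕ, 2 ≤ ℓ → ℓ ≤ n → a ℓ (ℓ - 1) + 1 ≤ a ℓ ℓ :=
          fun ℓ h2 hl => hdiag ℓ h2 (by omega)
        have hlower' : ∀ ℓ ∈ Finset.Icc 1 n, ∀ i : ℕ, 1 ≤ i → i ≤ ℓ - 2 →
            a ℓ i + 1 ≤ a ℓ (ℓ - 1) :=
          fun ℓ hℓ i h1 h2 => hlower ℓ (hsub hℓ) i h1 h2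
        have := ih hbound' hdiag' hlower' hσmap' hσinj'
        rw [hfix]
        linarith
      · -- top row decreases by at least 1
        have hkey : a (n+1) (σ (n+1)) + 1 ≤ a (n+1) (n+1) := by
          have hd := hdiag (n+1) (by omega) (le_refl _)
          simp only [Nat.add_sub_cancel] at hd
          rcases Nat.lt_or_ge (σ (n+1)) n with hlt | hge
          · have hl := hlower (n+1) htopmem (σ (n+1)) (by omega) (by omega)
            simp only [Nat.add_sub_cancel] at hl
            linarith
          · have : σ (n+1) = n := by omega
            rw [this]; linarith
        -- per-row gain bound on lower rows
        have hrow : ∀ ℓ ∈ Finset.Icc 1 n,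
            (C + 1) ^ (ℓ - 1) * a ℓ (σ ℓ)
              ≤ (C + 1) ^ (ℓ - 1) * a ℓ ℓ + (C + 1) ^ (ℓ - 1) * C := by
          intro ℓ hℓ
          have h1 := (hbound ℓ (hsub hℓ) (σ ℓ) (hσmap ℓ (hsub hℓ))).2
          have h2 := (hbound ℓ (hsub hℓ) ℓ (hsub hℓ)).1
          have hp : (0:ℝ) ≤ (C + 1) ^ (ℓ - 1) := by positivity
          nlinarith
        have hsum := Finset.sum_le_sum hrow
        rw [Finset.sum_add_distrib] at hsum
        -- geometric sum
        have hgeo : ∑ ℓ ∈ Finset.Icc 1 n, (C + 1) ^ (ℓ - 1) * C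
            = (C + 1) ^ n - 1 := by
          rw [← Finset.Ico_add_one_right_eq_Icc, Finset.sum_Ico_eq_sum_range]
          simp only [Nat.add_sub_cancel, Nat.add_sub_cancel_left, Nat.succ_sub_one]
          rw [← Finset.sum_mul]
          have hgs := geom_sum_mul (C + 1) n
          have h2 : C + 1 - 1 = C := by ring
          rw [h2] at hgs
          rw [hgs]
        rw [hgeo] at hsum
        have hp : (0:ℝ) ≤ (C + 1) ^ n := by positivity
        have htop : (C + 1) ^ (n + 1 - 1) * a (n+1) (σ (n+1))
            ≤ (C + 1) ^ (n + 1 - 1) * a (n+1) (n+1) - (C + 1) ^ n := by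
          simp only [Nat.add_sub_cancel]
          nlinarith
        linarith
end

section
/- Let k ≥ 1 be an integer, C ≥ 1 a real number, and a : {1,…,k} × {1,…,k} → ℝ satisfy: 0 ≤ a(ℓ,i) ≤ C for all ℓ, i; a(ℓ,ℓ) ≥ a(ℓ,ℓ−1) + 1 for all 2 ≤ ℓ ≤ k; and a(ℓ,ℓ−1) ≥ a(ℓ,i) + 1 for all ℓ and all i ≤ ℓ−2. Then for all 1 ≤ p < q ≤ k and every bijection σ from {p+1,…,q} onto {p,…,q−1}: Σ_{ℓ=p+1}^{q} (C+1)^{ℓ−1} · a(ℓ, σ(ℓ)) ≤ Σ_{ℓ=p+1}^{q} (C+1)^{ℓ−1} · a(ℓ, ℓ−1). That is, the shift matching (row ℓ to column ℓ−1) is a maximum-weight matching of rows p+1,…,q to columns p,…,q−1 when row ℓ is scaled by (C+1)^{ℓ−1}. -/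
open Finset

lemma tele_aux (f : ℕ → ℝ) (m : ℕ) (hm : 1 ≤ m) :
    ∀ n, m ≤ n → ∑ j ∈ Finset.Ico m n, (f j - f (j - 1)) = f (n - 1) - f (m - 1) := by
  intro n hn
  induction n, hn using Nat.le_induction with
  | base => simp
  | succ n hn ih =>
    rw [Finset.sum_Ico_succ_top hn, ih, Nat.add_sub_cancel]
    ring

/-- Second half of the Compatibility lemma: under the same hypotheses on `a`,
for any `1 ≤ p < q ≤ k` and any bijection `σ` from `{p+1,…,q}` onto
`{p,…,q−1}`, the shift matching (row `ℓ` to column `ℓ−1`) maximizes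
`Σ_{ℓ=p+1}^{q} (C+1)^{ℓ−1}·a(ℓ,σ(ℓ))`. -/
theorem shift_matching_is_max_weight
    (k : ℕ) (hk : 1 ≤ k) (C : ℝ) (hC : 1 ≤ C) (a : ℕ → ℕ → ℝ)
    (hbound : ∀ ℓ ∈ Finset.Icc 1 k, ∀ i ∈ Finset.Icc 1 k,
      0 ≤ a ℓ i ∧ a ℓ i ≤ C)
    (hdiag : ∀ ℓ : ℕ, 2 ≤ ℓ → ℓ ≤ k → a ℓ (ℓ - 1) + 1 ≤ a ℓ ℓ)
    (hlower : ∀ ℓ ∈ Finset.Icc 1 k, ∀ i : ℕ, 1 ≤ i → i ≤ ℓ - 2 →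
      a ℓ i + 1 ≤ a ℓ (ℓ - 1))
    (p q : ℕ) (hp : 1 ≤ p) (hpq : p < q) (hq : q ≤ k)
    (σ : ℕ → ℕ)
    (hσ : Set.BijOn σ (Finset.Icc (p + 1) q) (Finset.Icc p (q - 1))) :
    ∑ ℓ ∈ Finset.Icc (p + 1) q, (C + 1) ^ (ℓ - 1) * a ℓ (σ ℓ)
      ≤ ∑ ℓ ∈ Finset.Icc (p + 1) q, (C + 1) ^ (ℓ - 1) * a ℓ (ℓ - 1) := by
  induction q using Nat.strong_induction_on generalizing σ with
  | _ q ih =>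
  obtain ⟨q', rfl⟩ : ∃ q'', q = q'' + 1 := ⟨q - 1, by omega⟩
  have hC0 : (0:ℝ) < C + 1 := by linarith
  have hσq : σ (q' + 1) ∈ Set.Icc p q' := by
    have h1 : (q' + 1 : ℕ) ∈ (↑(Finset.Icc (p+1) (q'+1)) : Set ℕ) := by
      simp only [Finset.coe_Icc, Set.mem_Icc]; omega
    have := hσ.mapsTo h1
    simpa using this
  rw [Set.mem_Icc] at hσq
  by_cases hcase : σ (q' + 1) = q'
  · -- top row matched to shift
    rcases eq_or_lt_of_le (by omega : p ≤ q') with hpe | hplt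
    · subst hpe
      rw [Finset.Icc_self, Finset.sum_singleton, Finset.sum_singleton, hcase]
      simp
    · -- restrict σ
      have hinj := hσ.injOn
      have hσ' : Set.BijOn σ (Finset.Icc (p+1) q') (Finset.Icc p (q'-1)) := by
        refine ⟨?_, ?_, ?_⟩
        · intro ℓ hℓ
          simp only [Finset.coe_Icc, Set.mem_Icc] at hℓ ⊢
          have hℓdom : (ℓ : ℕ) ∈ (↑(Finset.Icc (p+1) (q'+1)) : Set ℕ) := by
            simp only [Finset.coe_Icc, Set.mem_Icc]; omega
          have h2 := hσ.mapsTo hℓdom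
          simp only [Finset.coe_Icc, Set.mem_Icc] at h2
          have hne : σ ℓ ≠ q' := by
            intro h
            have : ℓ = q' + 1 := hinj hℓdom (by
              simp only [Finset.coe_Icc, Set.mem_Icc]; omega) (by rw [h, hcase])
            omega
          omega
        · intro x hx y hy hxy
          simp only [Finset.coe_Icc, Set.mem_Icc] at hx hy
          apply hinj ?_ ?_ hxy <;>
          · simp only [Finset.coe_Icc, Set.mem_Icc]
            omega
        · intro y hy
          simp only [Finset.coe_Icc, Set.mem_Icc] at hy
          obtain ⟨ℓ, hℓ, hℓy⟩ := hσ.surjOn (by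
            simp only [Finset.coe_Icc, Set.mem_Icc]; omega : y ∈ (↑(Finset.Icc p (q'+1-1)) : Set ℕ))
          simp only [Finset.coe_Icc, Set.mem_Icc] at hℓ
          refine ⟨ℓ, ?_, hℓy⟩
          simp only [Finset.coe_Icc, Set.mem_Icc]
          have : ℓ ≠ q' + 1 := by
            intro h; rw [h, hcase] at hℓy; omega
          omega
      have hrec := ih q' (by omega) (by omega) (by omega) σ hσ'
      rw [Finset.sum_Icc_succ_top (by omega : p + 1 ≤ q' + 1),
          Finset.sum_Icc_succ_top (by omega : p + 1 ≤ q' + 1), hcase]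
      simp only [Nat.add_sub_cancel]
      linarith
  · -- top row matched to something ≤ q' - 1
    have hq'1 : 1 ≤ q' := by omega
    have hσq2 : σ (q' + 1) ≤ q' - 1 := by omega
    have hrowq : a (q'+1) (σ (q'+1)) + 1 ≤ a (q'+1) q' := by
      have := hlower (q'+1) (by simp only [Finset.mem_Icc]; omega) (σ (q'+1))
        (by omega) (by omega)
      simpa using this
    rw [← sub_nonpos, ← Finset.sum_sub_distrib]
    rw [Finset.sum_Icc_succ_top (by omega : p + 1 ≤ q' + 1)]
    have hbody : ∑ ℓ ∈ Finset.Icc (p+1) q',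
        ((C + 1) ^ (ℓ - 1) * a ℓ (σ ℓ) - (C + 1) ^ (ℓ - 1) * a ℓ (ℓ - 1))
        ≤ (C+1)^q' - (C+1)^p := by
      have htele := tele_aux (fun j => (C+1)^j) (p+1) (by omega) (q'+1) (by omega)
      rw [Finset.Ico_add_one_right_eq_Icc] at htele
      simp only [Nat.add_sub_cancel] at htele
      calc ∑ ℓ ∈ Finset.Icc (p+1) q',
            ((C + 1) ^ (ℓ - 1) * a ℓ (σ ℓ) - (C + 1) ^ (ℓ - 1) * a ℓ (ℓ - 1))
          ≤ ∑ ℓ ∈ Finset.Icc (p+1) q', ((C+1)^ℓ - (C+1)^(ℓ-1)) := by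
            apply Finset.sum_le_sum
            intro ℓ hℓ
            rw [Finset.mem_Icc] at hℓ
            have hℓdom : (ℓ : ℕ) ∈ (↑(Finset.Icc (p+1) (q'+1)) : Set ℕ) := by
              simp only [Finset.coe_Icc, Set.mem_Icc]; omega
            have h2 := hσ.mapsTo hℓdom
            simp only [Finset.coe_Icc, Set.mem_Icc, Nat.add_sub_cancel] at h2
            have hub := (hbound ℓ (by simp only [Finset.mem_Icc]; omega) (σ ℓ)
              (by simp only [Finset.mem_Icc]; omega)).2
            have hlb := (hbound ℓ (by simp only [Finset.mem_Icc]; omega) (ℓ-1)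
              (by simp only [Finset.mem_Icc]; omega)).1
            have hpos : (0:ℝ) < (C+1)^(ℓ-1) := pow_pos hC0 _
            have hpow : (C+1)^ℓ = (C+1)^(ℓ-1) * (C+1) := by
              rw [← pow_succ]; congr 1; omega
            nlinarith [mul_le_mul_of_nonneg_left hub hpos.le,
              mul_nonneg hpos.le hlb]
        _ = (C+1)^q' - (C+1)^p := htele
    have htop : (C + 1) ^ (q' + 1 - 1) * a (q'+1) (σ (q'+1))
        - (C + 1) ^ (q' + 1 - 1) * a (q'+1) (q' + 1 - 1) ≤ -(C+1)^q' := by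
      simp only [Nat.add_sub_cancel]
      have hpos : (0:ℝ) < (C+1)^q' := pow_pos hC0 _
      nlinarith [mul_le_mul_of_nonneg_left
        (show a (q'+1) (σ (q'+1)) - a (q'+1) q' ≤ -1 by linarith) hpos.le]
    have hppos : (0:ℝ) < (C+1)^p := pow_pos hC0 _
    linarith
end

section
/- For every ℓ ∈ {1,…,k−1}: max over all subsets S of the ground set of (v'_ℓ(S) − v'_{ℓ+1}(S)) equals (k+ℓ) · max over all A ⊆ Fin m of (v(A) − w(A)), where the differences are taken in ℤ. -/
open Finset

def copyPart (m k : ℕ) (S : Finset (Fin (k - 1) × Fin m)) (i : Fin (k - 1)) :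
    Finset (Fin m) :=
  (S.filter (fun p => p.1 = i)).image Prod.snd

def scaledDU (m k : ℕ) (v w : Finset (Fin m) → ℕ) (ℓ : ℕ)
    (S : Finset (Fin (k - 1) × Fin m)) : ℕ :=
  ∑ i : Fin (k - 1), (k + (i : ℕ) + 1) *
    (if ℓ ≤ (i : ℕ) + 1 then v (copyPart m k S i) else w (copyPart m k S i))

def itemTrunc {α : Type*} (y : ℕ) (u : Finset α → ℕ) (S : Finset α) : ℕ :=
  (S.powerset.filter (fun T => T.card ≤ y)).sup u

def ITfun (m k : ℕ) (v w : Finset (Fin m) → ℕ) (ℓ : ℕ)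
    (S : Finset (Fin (k - 1) × Fin m)) : ℕ :=
  itemTrunc m (scaledDU m k v w ℓ) S

lemma le_itemTrunc {α : Type*} (y : ℕ) (u : Finset α → ℕ) {S T : Finset α}
    (hTS : T ⊆ S) (hT : T.card ≤ y) : u T ≤ itemTrunc y u S :=
  Finset.le_sup (by simp [Finset.mem_filter, Finset.mem_powerset, hTS, hT])

lemma itemTrunc_attains {α : Type*} (y : ℕ) (u : Finset α → ℕ) (S : Finset α) :
    ∃ T, T ⊆ S ∧ T.card ≤ y ∧ itemTrunc y u S = u T := by
  have hne : (S.powerset.filter (fun T => T.card ≤ y)).Nonempty :=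
    ⟨∅, by simp⟩
  obtain ⟨T, hT, hTeq⟩ := Finset.exists_mem_eq_sup _ hne u
  simp only [Finset.mem_filter, Finset.mem_powerset] at hT
  exact ⟨T, hT.1, hT.2, hTeq⟩

lemma copyPart_mono {m k : ℕ} {S T : Finset (Fin (k - 1) × Fin m)}
    (h : T ⊆ S) (i : Fin (k - 1)) : copyPart m k T i ⊆ copyPart m k S i :=
  Finset.image_subset_image (Finset.filter_subset_filter _ h)

lemma copyPart_image (m k : ℕ) (A : Finset (Fin m)) (j i : Fin (k - 1)) :
    copyPart m k (A.image (fun a => (j, a))) i = if i = j then A else ∅ := by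
  unfold copyPart
  ext x
  simp only [Finset.mem_image, Finset.mem_filter]
  split_ifs with h
  · subst h
    constructor
    · rintro ⟨p, ⟨⟨a, ha, rfl⟩, _⟩, rfl⟩; exact ha
    · intro hx; exact ⟨(i, x), ⟨⟨x, hx, rfl⟩, rfl⟩, rfl⟩
  · simp only [Finset.notMem_empty, iff_false]
    rintro ⟨p, ⟨⟨a, ha, rfl⟩, hp⟩, rfl⟩
    exact h hp.symm

lemma scaledDU_single (m k : ℕ) (v w : Finset (Fin m) → ℕ)
    (hv0 : v ∅ = 0) (hw0 : w ∅ = 0) (ℓ : ℕ) (j : Fin (k - 1))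
    (T : Finset (Fin (k - 1) × Fin m)) (hT : ∀ i, i ≠ j → copyPart m k T i = ∅) :
    scaledDU m k v w ℓ T = (k + (j : ℕ) + 1) *
      (if ℓ ≤ (j : ℕ) + 1 then v (copyPart m k T j) else w (copyPart m k T j)) := by
  unfold scaledDU
  rw [Finset.sum_eq_single j]
  · intro i _ hij
    rw [hT i hij]
    split_ifs <;> simp [hv0, hw0]
  · intro h; exact absurd (Finset.mem_univ j) h

lemma scaledDU_diff (m k : ℕ) (v w : Finset (Fin m) → ℕ) {ℓ : ℕ}
    (_hℓ1 : 1 ≤ ℓ) (j : Fin (k - 1)) (hjv : (j : ℕ) + 1 = ℓ)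
    (T : Finset (Fin (k - 1) × Fin m)) :
    (scaledDU m k v w ℓ T : ℤ) - scaledDU m k v w (ℓ + 1) T
      = (k + ℓ : ℤ) * ((v (copyPart m k T j) : ℤ) - w (copyPart m k T j)) := by
  unfold scaledDU
  push_cast
  rw [← Finset.sum_sub_distrib, Finset.sum_eq_single j]
  · have hc : ((j : ℕ) : ℤ) = (ℓ : ℤ) - 1 := by omega
    split_ifs with h1 h2 h2 <;> first
      | omega
      | (rw [hc]; ring)
  · intro i _ hij
    have hne : (i : ℕ) + 1 ≠ ℓ := by
      intro h
      exact hij (Fin.ext (by omega))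
    split_ifs with h1 h2 h2 <;> [ring; omega; omega; ring]
  · intro h; exact absurd (Finset.mem_univ _) h

lemma ITfun_image (m k : ℕ) (v w : Finset (Fin m) → ℕ)
    (hv0 : v ∅ = 0) (hw0 : w ∅ = 0)
    (hvmono : ∀ A B : Finset (Fin m), A ⊆ B → v A ≤ v B)
    (hwmono : ∀ A B : Finset (Fin m), A ⊆ B → w A ≤ w B)
    (ℓ' : ℕ) (j : Fin (k - 1)) (A : Finset (Fin m)) :
    ITfun m k v w ℓ' (A.image (fun a => (j, a)))
      = (k + (j : ℕ) + 1) * (if ℓ' ≤ (j : ℕ) + 1 then v A else w A) := by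
  set S₀ : Finset (Fin (k - 1) × Fin m) := A.image (fun a => (j, a)) with hS₀
  have hcard : S₀.card ≤ m := by
    rw [hS₀, Finset.card_image_of_injective _ (fun a b h => by simpa using h)]
    exact (Finset.card_le_univ A).trans (by simp)
  have hcp : ∀ i, copyPart m k S₀ i = if i = j then A else ∅ :=
    fun i => copyPart_image m k A j i
  apply le_antisymm
  · obtain ⟨T, hTS, hTc, hTeq⟩ := itemTrunc_attains m (scaledDU m k v w ℓ') S₀
    rw [ITfun, hTeq]
    have hT0 : ∀ i, i ≠ j → copyPart m k T i = ∅ := by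
      intro i hi
      have := copyPart_mono hTS i
      rw [hcp i, if_neg hi] at this
      exact Finset.subset_empty.mp this
    rw [scaledDU_single m k v w hv0 hw0 ℓ' j T hT0]
    have hsub : copyPart m k T j ⊆ A := by
      have := copyPart_mono hTS j
      rwa [hcp j, if_pos rfl] at this
    split_ifs
    · exact Nat.mul_le_mul_left _ (hvmono _ _ hsub)
    · exact Nat.mul_le_mul_left _ (hwmono _ _ hsub)
  · refine le_trans ?_ (le_itemTrunc m _ (Finset.Subset.refl S₀) hcard)
    rw [scaledDU_single m k v w hv0 hw0 ℓ' j S₀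
      (fun i hi => by rw [hcp i, if_neg hi]), hcp j, if_pos rfl]

/-- For every `ℓ ∈ {1,…,k−1}`, the maximum over subsets `S` of the ground set
of `v'_ℓ(S) − v'_{ℓ+1}(S)` equals `(k+ℓ)` times the maximum over `A ⊆ Fin m`
of `v(A) − w(A)` (differences in `ℤ`). -/
theorem IT_consecutive_difference_eq (m k : ℕ) (hk : 2 ≤ k)
    (v w : Finset (Fin m) → ℕ)
    (hv0 : v ∅ = 0) (hw0 : w ∅ = 0)
    (hvmono : ∀ A B : Finset (Fin m), A ⊆ B → v A ≤ v B)
    (hwmono : ∀ A B : Finset (Fin m), A ⊆ B → w A ≤ w B) :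
    ∀ ℓ : ℕ, 1 ≤ ℓ → ℓ ≤ k - 1 →
      ((Finset.univ : Finset (Fin (k - 1) × Fin m)).powerset.sup'
          ⟨∅, Finset.empty_mem_powerset _⟩
          (fun S => (ITfun m k v w ℓ S : ℤ) - ITfun m k v w (ℓ + 1) S))
        = (k + ℓ : ℤ) *
          ((Finset.univ : Finset (Fin m)).powerset.sup'
            ⟨∅, Finset.empty_mem_powerset _⟩
            (fun A => (v A : ℤ) - w A)) := by
  intro ℓ hℓ1 hℓk
  have hℓ' : ℓ - 1 < k - 1 := by omega
  set j : Fin (k - 1) := ⟨ℓ - 1, hℓ'⟩ with hj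
  have hj1 : (j : ℕ) + 1 = ℓ := by simp [hj]; omega
  apply le_antisymm
  · apply Finset.sup'_le
    intro S hS
    obtain ⟨T, hTS, hTc, hTeq⟩ := itemTrunc_attains m (scaledDU m k v w ℓ) S
    have h2 : scaledDU m k v w (ℓ + 1) T ≤ ITfun m k v w (ℓ + 1) S :=
      le_itemTrunc m _ hTS hTc
    have hdiff := scaledDU_diff m k v w hℓ1 j hj1 T
    have hA : (v (copyPart m k T j) : ℤ) - w (copyPart m k T j)
        ≤ (Finset.univ : Finset (Fin m)).powerset.sup'
            ⟨∅, Finset.empty_mem_powerset _⟩ (fun A => (v A : ℤ) - w A) :=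
      Finset.le_sup' (fun A => (v A : ℤ) - w A)
        (Finset.mem_powerset.mpr (Finset.subset_univ _))
    have hk0 : (0 : ℤ) ≤ (k : ℤ) + ℓ := by positivity
    calc (ITfun m k v w ℓ S : ℤ) - ITfun m k v w (ℓ + 1) S
        ≤ (scaledDU m k v w ℓ T : ℤ) - scaledDU m k v w (ℓ + 1) T := by
          rw [ITfun, hTeq]
          have := h2
          rw [ITfun] at h2 ⊢
          omega
      _ = (k + ℓ : ℤ) * ((v (copyPart m k T j) : ℤ)
            - w (copyPart m k T j)) := hdiff
      _ ≤ _ := mul_le_mul_of_nonneg_left hA hk0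
  · obtain ⟨A, hAmem, hAeq⟩ := Finset.exists_mem_eq_sup'
      (⟨∅, Finset.empty_mem_powerset _⟩ :
        ((Finset.univ : Finset (Fin m)).powerset).Nonempty)
      (fun A => (v A : ℤ) - w A)
    rw [hAeq]
    have h1 := ITfun_image m k v w hv0 hw0 hvmono hwmono ℓ j A
    have h2 := ITfun_image m k v w hv0 hw0 hvmono hwmono (ℓ + 1) j A
    rw [if_pos (by omega : ℓ ≤ (j : ℕ) + 1)] at h1
    rw [if_neg (by omega : ¬ (ℓ + 1 ≤ (j : ℕ) + 1))] at h2
    have hle := Finset.le_sup'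
      (fun S => (ITfun m k v w ℓ S : ℤ) - ITfun m k v w (ℓ + 1) S)
      (Finset.mem_powerset.mpr
        (Finset.subset_univ (A.image (fun a => (j, a)))))
    rw [h1, h2] at hle
    refine le_trans (le_of_eq ?_) hle
    push_cast
    have hc : ((ℓ - 1 : ℕ) : ℤ) = (ℓ : ℤ) - 1 := by omega
    rw [hc]; ring
end

section
/- Assume there exists A ⊆ Fin m with v(A) ≥ w(A) + 1. Then the instance VT(v,w) is 2·v([m])-balanced: for every ℓ ∈ {1,…,k−1}, v''_k(G) ≤ 2·v([m]) · max_T (v''_ℓ(T) − v''_{ℓ+1}(T)), where G is the entire ground set and the max is over all subsets T of the ground set. (In particular, v''_k(G) ≤ 2k·v([m]) and max_T (v''_ℓ(T) − v''_{ℓ+1}(T)) ≥ k+ℓ.) -/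
open Finset

/-- `v''_ℓ`, the `ℓ`-th function of the instance `VT(v,w)`: the value truncation
at `x = 2k·v([m])` of the scaled disjoint union `v_ℓ`. -/
def VTfun (m k : ℕ) (v w : Finset (Fin m) → ℕ) (ℓ : ℕ)
    (S : Finset (Fin (k - 1) × Fin m)) : ℕ :=
  min (scaledDU m k v w ℓ S) (2 * k * v (Finset.univ : Finset (Fin m)))

lemma copyPart_prod (m k : ℕ) (i₀ : Fin (k-1)) (A : Finset (Fin m)) (i : Fin (k-1)) :
    copyPart m k ({i₀} ×ˢ A) i = if i = i₀ then A else ∅ := by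
  ext a
  simp only [copyPart, Finset.mem_image, Finset.mem_filter, Finset.mem_product,
    Finset.mem_singleton]
  split <;> rename_i h <;> simp <;> aesop

lemma scaledDU_prod (m k : ℕ) (v w : Finset (Fin m) → ℕ)
    (hv0 : v ∅ = 0) (hw0 : w ∅ = 0) (ℓ' : ℕ) (i₀ : Fin (k-1)) (A : Finset (Fin m)) :
    scaledDU m k v w ℓ' ({i₀} ×ˢ A) =
      (k + (i₀ : ℕ) + 1) * (if ℓ' ≤ (i₀ : ℕ) + 1 then v A else w A) := by
  unfold scaledDU
  rw [Finset.sum_eq_single i₀]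
  · rw [copyPart_prod]; simp
  · intro i _ hi
    rw [copyPart_prod]; simp [hi, hv0, hw0]
  · simp
/-- If some `A` has `v(A) ≥ w(A) + 1`, then `VT(v,w)` is `2·v([m])`-balanced:
for every `ℓ ∈ {1,…,k−1}`,
`v''_k(G) ≤ 2·v([m]) · max_T (v''_ℓ(T) − v''_{ℓ+1}(T))`, where `G` is the whole
ground set. In particular `v''_k(G) ≤ 2k·v([m])` and the max is `≥ k+ℓ`. -/
theorem VT_balanced (m k : ℕ) (hk : 2 ≤ k)
    (v w : Finset (Fin m) → ℕ)
    (hv0 : v ∅ = 0) (hw0 : w ∅ = 0)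
    (hvmono : ∀ A B : Finset (Fin m), A ⊆ B → v A ≤ v B)
    (hwmono : ∀ A B : Finset (Fin m), A ⊆ B → w A ≤ w B)
    (hgap : ∃ A : Finset (Fin m), w A + 1 ≤ v A) :
    (∀ ℓ : ℕ, 1 ≤ ℓ → ℓ ≤ k - 1 →
      (VTfun m k v w k (Finset.univ : Finset (Fin (k - 1) × Fin m)) : ℤ)
        ≤ (2 * v (Finset.univ : Finset (Fin m)) : ℤ) *
          ((Finset.univ : Finset (Fin (k - 1) × Fin m)).powerset.sup'
            ⟨∅, Finset.empty_mem_powerset _⟩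
            (fun T => (VTfun m k v w ℓ T : ℤ) - VTfun m k v w (ℓ + 1) T))) ∧
    (VTfun m k v w k (Finset.univ : Finset (Fin (k - 1) × Fin m))
        ≤ 2 * k * v (Finset.univ : Finset (Fin m))) ∧
    (∀ ℓ : ℕ, 1 ≤ ℓ → ℓ ≤ k - 1 →
      (k + ℓ : ℤ) ≤
        (Finset.univ : Finset (Fin (k - 1) × Fin m)).powerset.sup'
          ⟨∅, Finset.empty_mem_powerset _⟩
          (fun T => (VTfun m k v w ℓ T : ℤ) - VTfun m k v w (ℓ + 1) T)) := by
  obtain ⟨A, hA⟩ := hgap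
  have hvA1 : 1 ≤ v A := le_trans (Nat.le_add_left 1 (w A)) hA
  have hvAu : v A ≤ v univ := hvmono A univ (Finset.subset_univ A)
  have hvu1 : 1 ≤ v univ := le_trans hvA1 hvAu
  have hwA : w A ≤ v univ := le_trans (le_trans (Nat.le_succ _) hA) hvAu
  -- key: for each valid ℓ, the sup is at least k + ℓ
  have key : ∀ ℓ : ℕ, 1 ≤ ℓ → ℓ ≤ k - 1 →
      (k + ℓ : ℤ) ≤
        (Finset.univ : Finset (Fin (k - 1) × Fin m)).powerset.sup'
          ⟨∅, Finset.empty_mem_powerset _⟩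
          (fun T => (VTfun m k v w ℓ T : ℤ) - VTfun m k v w (ℓ + 1) T) := by
    intro ℓ hℓ1 hℓk
    have hlt : ℓ - 1 < k - 1 := by omega
    set i₀ : Fin (k - 1) := ⟨ℓ - 1, hlt⟩ with hi₀
    set T : Finset (Fin (k - 1) × Fin m) := {i₀} ×ˢ A with hT
    have hival : (i₀ : ℕ) = ℓ - 1 := rfl
    have h1 : scaledDU m k v w ℓ T = (k + ℓ) * v A := by
      rw [hT, scaledDU_prod m k v w hv0 hw0, hival, if_pos (by omega)]
      congr 1; omega
    have h2 : scaledDU m k v w (ℓ + 1) T = (k + ℓ) * w A := by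
      rw [hT, scaledDU_prod m k v w hv0 hw0, hival, if_neg (by omega)]
      congr 1; omega
    have hb1 : (k + ℓ) * v A ≤ 2 * k * v univ := by
      calc (k + ℓ) * v A ≤ (2 * k) * v univ :=
        Nat.mul_le_mul (by omega) hvAu
      _ = 2 * k * v univ := rfl
    have hb2 : (k + ℓ) * w A ≤ 2 * k * v univ :=
      Nat.mul_le_mul (by omega) hwA
    have hV1 : VTfun m k v w ℓ T = (k + ℓ) * v A := by
      rw [VTfun, h1, min_eq_left hb1]
    have hV2 : VTfun m k v w (ℓ + 1) T = (k + ℓ) * w A := by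
      rw [VTfun, h2, min_eq_left hb2]
    have hTmem : T ∈ (Finset.univ : Finset (Fin (k - 1) × Fin m)).powerset :=
      Finset.mem_powerset.mpr (Finset.subset_univ T)
    refine le_trans ?_ (Finset.le_sup' _ hTmem)
    rw [hV1, hV2]
    push_cast
    have : (w A : ℤ) + 1 ≤ (v A : ℤ) := by exact_mod_cast hA
    nlinarith [Nat.zero_le (k + ℓ)]
  refine ⟨?_, min_le_right _ _, key⟩
  intro ℓ hℓ1 hℓk
  have hsup := key ℓ hℓ1 hℓk
  have hVk : (VTfun m k v w k (Finset.univ : Finset (Fin (k - 1) × Fin m)) : ℤ)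
      ≤ 2 * k * v univ := by
    exact_mod_cast Nat.cast_le.mpr (min_le_right _ _)
  calc (VTfun m k v w k (Finset.univ : Finset (Fin (k - 1) × Fin m)) : ℤ)
      ≤ 2 * k * v univ := hVk
    _ ≤ (2 * v univ : ℤ) * (k + ℓ) := by push_cast; nlinarith [hvu1]
    _ ≤ _ := by
        apply mul_le_mul_of_nonneg_left hsup
        positivity
end

section
/- Let E be a finite type, let f : Finset E → ℝ be subadditive (f(A ∪ B) ≤ f(A) + f(B) for all A, B), and let y be a natural number. Then the item truncation f'(S) := max_{T ⊆ S, |T| ≤ y} f(T) is subadditive. (That is, the class of subadditive set functions is closed under item truncation.) -/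
open Finset

/-- Item truncation at `y` of a real-valued set function:
`f'(S) = max_{T ⊆ S, |T| ≤ y} f(T)` (the empty set is always a candidate). -/
noncomputable def itemTruncR {E : Type*} (y : ℕ) (f : Finset E → ℝ)
    (S : Finset E) : ℝ :=
  (S.powerset.filter (fun T => T.card ≤ y)).sup'
    ⟨∅, by simp⟩ f

/-- Subadditive set functions are closed under item truncation: if `f` is
subadditive then so is `S ↦ max_{T ⊆ S, |T| ≤ y} f(T)`. -/
theorem subadditive_closed_under_itemTruncation
    {E : Type*} [Fintype E] [DecidableEq E] (f : Finset E → ℝ)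
    (hsub : ∀ A B : Finset E, f (A ∪ B) ≤ f A + f B)
    (y : ℕ) :
    ∀ A B : Finset E, itemTruncR y f (A ∪ B) ≤ itemTruncR y f A + itemTruncR y f B := by
  intro A B
  unfold itemTruncR
  apply Finset.sup'_le
  intro T hT
  simp only [Finset.mem_filter, Finset.mem_powerset] at hT
  obtain ⟨hTsub, hTcard⟩ := hT
  have hTeq : T = (T ∩ A) ∪ (T ∩ B) := by
    rw [← Finset.inter_union_distrib_left, Finset.inter_eq_left.mpr hTsub]
  have h1 : f (T ∩ A) ≤ (A.powerset.filter (fun T => T.card ≤ y)).sup' ⟨∅, by simp⟩ f := by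
    apply Finset.le_sup'
    simp only [Finset.mem_filter, Finset.mem_powerset]
    exact ⟨Finset.inter_subset_right, le_trans (Finset.card_le_card Finset.inter_subset_left) hTcard⟩
  have h2 : f (T ∩ B) ≤ (B.powerset.filter (fun T => T.card ≤ y)).sup' ⟨∅, by simp⟩ f := by
    apply Finset.le_sup'
    simp only [Finset.mem_filter, Finset.mem_powerset]
    exact ⟨Finset.inter_subset_right, le_trans (Finset.card_le_card Finset.inter_subset_left) hTcard⟩
  calc f T = f ((T ∩ A) ∪ (T ∩ B)) := by rw [← hTeq]
    _ ≤ f (T ∩ A) + f (T ∩ B) := hsub _ _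
    _ ≤ _ := add_le_add h1 h2
end
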